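/- Let X be a real Hilbert space and let T : X → X be a continuous linear nonexpansive operator. Let λ ∈ (0,1), let x_0 ∈ X, and define x_{n+1} := (1−λ)x_n + λ T x_n for all n. Then (x_n) converges strongly to P_F x_0, where F := Fix T and P_F denotes the orthogonal projection of X onto the closed subspace F. -/

import Mathlib

open Filter Topology
open scoped RealInnerProductSpace

/-- **Baillon–Bruck–Reich theorem.** If `T` is a continuous linear nonexpansive operator
on a real Hilbert space, `λ ∈ (0,1)`, and `xₙ₊₁ = (1-λ)xₙ + λ T xₙ`, then `(xₙ)`
converges strongly to the orthogonal projection of `x₀` onto `F := Fix T = ker (Id - T)`. -/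
theorem bbr_constant_parameter
    {X : Type*} [NormedAddCommGroup X] [InnerProductSpace ℝ X] [CompleteSpace X]
    (T : X →L[ℝ] X) (hT : ∀ x : X, ‖T x‖ ≤ ‖x‖)
    (lam : ℝ) (hlam : lam ∈ Set.Ioo (0 : ℝ) 1)
    (x : ℕ → X) (hx : ∀ n, x (n + 1) = (1 - lam) • x n + lam • T (x n)) :
    Tendsto x atTop
      (𝓝 ((LinearMap.ker ((ContinuousLinearMap.id ℝ X - T : X →L[ℝ] X) : X →ₗ[ℝ] X)).orthogonalProjectionOnto (x 0) : X)) := by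
  obtain ⟨hl0, hl1⟩ := hlam
  set S : X →L[ℝ] X := (1 - lam) • ContinuousLinearMap.id ℝ X + lam • T with hSdef
  have hSapp : ∀ v : X, S v = (1 - lam) • v + lam • T v := fun v => rfl
  -- S and T commute
  have hTS : ∀ v : X, T (S v) = S (T v) := by
    intro v; simp [hSapp, map_add, map_smul]
  -- key inequality
  have key : ∀ v : X, ‖S v‖ ^ 2 + lam * (1 - lam) * ‖v - T v‖ ^ 2 ≤ ‖v‖ ^ 2 := by
    intro v
    have hTv : ‖T v‖ ≤ ‖v‖ := hT v
    have e1 : (inner ℝ (S v) (S v) : ℝ) = (1 - lam) ^ 2 * (inner ℝ (v) (v) : ℝ) +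
        2 * (lam * (1 - lam)) * (inner ℝ (v) (T v) : ℝ) + lam ^ 2 * (inner ℝ (T v) (T v) : ℝ) := by
      simp only [hSapp, inner_add_left, inner_add_right, real_inner_smul_left,
        real_inner_smul_right]
      rw [real_inner_comm (T v) v]; ring
    have e2 : (inner ℝ (v - T v) (v - T v) : ℝ) = (inner ℝ (v) (v) : ℝ) - 2 * (inner ℝ (v) (T v) : ℝ) + (inner ℝ (T v) (T v) : ℝ) := by
      simp only [inner_sub_left, inner_sub_right]
      rw [real_inner_comm (T v) v]; ring
    have hc : (inner ℝ (T v) (T v) : ℝ) ≤ (inner ℝ (v) (v) : ℝ) := by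
      rw [real_inner_self_eq_norm_sq, real_inner_self_eq_norm_sq]
      exact pow_le_pow_left₀ (norm_nonneg _) hTv 2
    rw [← real_inner_self_eq_norm_sq, ← real_inner_self_eq_norm_sq,
      ← real_inner_self_eq_norm_sq, e1, e2]
    nlinarith [hc, hl0.le, hl1.le]
  -- S is nonexpansive
  have hSle : ∀ v : X, ‖S v‖ ≤ ‖v‖ := by
    intro v
    have h := key v
    have h2 : ‖S v‖ ^ 2 ≤ ‖v‖ ^ 2 := by
      nlinarith [mul_nonneg (mul_nonneg hl0.le (by linarith : (0:ℝ) ≤ 1 - lam))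
        (sq_nonneg ‖v - T v‖)]
    nlinarith [norm_nonneg (S v), norm_nonneg v]
  have hSnle : ∀ (n : ℕ) (v : X), ‖(S ^ n) v‖ ≤ ‖v‖ := by
    intro n
    induction n with
    | zero => intro v; simp
    | succ n ih =>
      intro v
      rw [pow_succ, ContinuousLinearMap.mul_apply]
      exact le_trans (ih (S v)) (hSle v)
  -- x n = S^n (x 0)
  have hxS : ∀ n, x n = (S ^ n) (x 0) := by
    intro n
    induction n with
    | zero => simp
    | succ n ih =>
      rw [hx n, ih, pow_succ', ContinuousLinearMap.mul_apply, hSapp]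
  -- asymptotic regularity
  have regA : ∀ z : X, Tendsto (fun n => (S ^ n) z - T ((S ^ n) z)) atTop (𝓝 0) := by
    intro z
    set a : ℕ → ℝ := fun n => ‖(S ^ n) z‖ ^ 2 with ha
    have hstep : ∀ n, a (n + 1) + lam * (1 - lam) * ‖(S ^ n) z - T ((S ^ n) z)‖ ^ 2 ≤ a n := by
      intro n
      have h := key ((S ^ n) z)
      have : a (n + 1) = ‖S ((S ^ n) z)‖ ^ 2 := by
        show ‖(S ^ (n + 1)) z‖ ^ 2 = _
        rw [pow_succ' S n, ContinuousLinearMap.mul_apply]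
      rw [this]; exact h
    have hanti : Antitone a := by
      apply antitone_nat_of_succ_le
      intro n
      have := hstep n
      nlinarith [mul_nonneg (mul_nonneg hl0.le (by linarith : (0:ℝ) ≤ 1 - lam))
        (sq_nonneg ‖(S ^ n) z - T ((S ^ n) z)‖)]
    have hbdd : BddBelow (Set.range a) := ⟨0, by rintro _ ⟨n, rfl⟩; positivity⟩
    have hconv : Tendsto a atTop (𝓝 (⨅ n, a n)) := tendsto_atTop_ciInf hanti hbdd
    have hconv' : Tendsto (fun n => a (n + 1)) atTop (𝓝 (⨅ n, a n)) :=
      hconv.comp (tendsto_add_atTop_nat 1)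
    have hdiff : Tendsto (fun n => a n - a (n + 1)) atTop (𝓝 0) := by
      simpa using hconv.sub hconv'
    have hsq : Tendsto (fun n => ‖(S ^ n) z - T ((S ^ n) z)‖ ^ 2) atTop (𝓝 0) := by
      have hpos : (0 : ℝ) < lam * (1 - lam) := by nlinarith
      have hb : ∀ n, ‖(S ^ n) z - T ((S ^ n) z)‖ ^ 2 ≤ (a n - a (n + 1)) / (lam * (1 - lam)) := by
        intro n
        rw [le_div_iff₀ hpos]
        nlinarith [hstep n]
      have hlim : Tendsto (fun n => (a n - a (n + 1)) / (lam * (1 - lam))) atTop (𝓝 0) := by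
        simpa using hdiff.div_const (lam * (1 - lam))
      exact squeeze_zero (fun n => by positivity) hb hlim
    have hnorm : Tendsto (fun n => ‖(S ^ n) z - T ((S ^ n) z)‖) atTop (𝓝 0) := by
      have h := (Real.continuous_sqrt.tendsto 0).comp hsq
      rw [Real.sqrt_zero] at h
      exact h.congr fun n => Real.sqrt_sq (norm_nonneg _)
    exact tendsto_zero_iff_norm_tendsto_zero.mpr hnorm
  -- commutation of T with powers of S
  have hcomm : ∀ (n : ℕ) (z : X), T ((S ^ n) z) = (S ^ n) (T z) := by
    intro n
    induction n with
    | zero => intro z; simp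
    | succ n ih =>
      intro z
      rw [pow_succ', ContinuousLinearMap.mul_apply, hTS, ih, ContinuousLinearMap.mul_apply]
  have regB : ∀ z : X, Tendsto (fun n => (S ^ n) (z - T z)) atTop (𝓝 0) := by
    intro z
    have : ∀ n, (S ^ n) (z - T z) = (S ^ n) z - T ((S ^ n) z) := by
      intro n; rw [map_sub, hcomm]
    simpa [this] using regA z
  set F := LinearMap.ker ((ContinuousLinearMap.id ℝ X - T : X →L[ℝ] X) : X →ₗ[ℝ] X) with hF
  set p : X := (F.orthogonalProjectionOnto (x 0) : X) with hp
  have hpF : p ∈ F := (F.orthogonalProjectionOnto (x 0)).2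
  have hTp : T p = p := by
    have := LinearMap.mem_ker.mp hpF
    have h2 : p - T p = 0 := by simpa using this
    exact (sub_eq_zero.mp h2).symm
  have hSp : ∀ n : ℕ, (S ^ n) p = p := by
    intro n
    induction n with
    | zero => simp
    | succ n ih =>
      rw [pow_succ', ContinuousLinearMap.mul_apply, ih, hSapp, hTp, ← add_smul]
      simp
  -- orthogonal complement of F is contained in the closure of range (id - T)
  set R := LinearMap.range ((ContinuousLinearMap.id ℝ X - T : X →L[ℝ] X) : X →ₗ[ℝ] X) with hR
  have hRF : Rᗮ ≤ F := by
    intro u hu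
    have h1 : ∀ z : X, (inner ℝ (z - T z) u : ℝ) = 0 := by
      intro z
      have := (Submodule.mem_orthogonal R u).mp hu ((ContinuousLinearMap.id ℝ X - T) z) ⟨z, rfl⟩
      simpa using this
    have h2 : (inner ℝ (T u) u : ℝ) = (inner ℝ u u : ℝ) := by
      have := h1 u
      rw [inner_sub_left] at this
      linarith
    have h3 : (inner ℝ (T u - u) (T u - u) : ℝ) ≤ 0 := by
      have hc : (inner ℝ (T u) (T u) : ℝ) ≤ (inner ℝ u u : ℝ) := by
        rw [real_inner_self_eq_norm_sq, real_inner_self_eq_norm_sq]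
        exact pow_le_pow_left₀ (norm_nonneg _) (hT u) 2
      have e : (inner ℝ (T u - u) (T u - u) : ℝ)
          = (inner ℝ (T u) (T u) : ℝ) - 2 * (inner ℝ (T u) u : ℝ) + (inner ℝ u u : ℝ) := by
        simp only [inner_sub_left, inner_sub_right]
        rw [real_inner_comm u (T u)]; ring
      rw [e, h2]; linarith
    have h4 : T u - u = 0 := by
      have := real_inner_self_nonpos.mp h3
      exact this
    refine LinearMap.mem_ker.mpr ?_
    have : u - T u = 0 := by rw [← neg_eq_zero, neg_sub]; exact h4
    simpa using this
  have hclos : Fᗮ ≤ R.topologicalClosure := by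
    calc Fᗮ ≤ Rᗮᗮ := Submodule.orthogonal_le hRF
    _ = R.topologicalClosure := R.orthogonal_orthogonal_eq_closure
  have hwF : x 0 - p ∈ Fᗮ := F.sub_starProjection_mem_orthogonal (x 0)
  have hwc : x 0 - p ∈ closure (R : Set X) := by
    rw [← Submodule.topologicalClosure_coe]
    exact hclos hwF
  have hmain : Tendsto (fun n => (S ^ n) (x 0 - p)) atTop (𝓝 0) := by
    rw [NormedAddCommGroup.tendsto_nhds_zero]
    intro ε hε
    obtain ⟨y, hyR, hy⟩ := Metric.mem_closure_iff.mp hwc (ε / 2) (by positivity)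
    obtain ⟨z, hz⟩ := hyR
    have hy' : ‖x 0 - p - y‖ < ε / 2 := by rwa [dist_eq_norm] at hy
    have hzy : y = z - T z := by rw [← hz]; simp
    have h2 : Tendsto (fun n => (S ^ n) y) atTop (𝓝 0) := by rw [hzy]; exact regB z
    have h3 : ∀ᶠ n in atTop, ‖(S ^ n) y‖ < ε / 2 :=
      (tendsto_zero_iff_norm_tendsto_zero.mp h2).eventually (gt_mem_nhds (by positivity))
    filter_upwards [h3] with n hn
    have hsplit : (S ^ n) (x 0 - p) = (S ^ n) (x 0 - p - y) + (S ^ n) y := by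
      rw [← map_add]; congr 1; abel
    rw [hsplit]
    calc ‖(S ^ n) (x 0 - p - y) + (S ^ n) y‖
        ≤ ‖(S ^ n) (x 0 - p - y)‖ + ‖(S ^ n) y‖ := norm_add_le _ _
      _ ≤ ‖x 0 - p - y‖ + ‖(S ^ n) y‖ := add_le_add_left (hSnle n _) _
      _ < ε / 2 + ε / 2 := add_lt_add hy' hn
      _ = ε := by ring
  have hfin : Tendsto x atTop (𝓝 p) := by
    have h := hmain.const_add p
    rw [add_zero] at h
    refine h.congr fun n => ?_
    rw [hxS n, map_sub, hSp n]
    abel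
  exact hfin
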